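/- The formal power series identity exp(∑_{n≥1} (∑_{d|n} d·c_d) t^n / n) = ∏_{d≥1} (1 - t^d)^{-c_d} holds, where (c_d) is any sequence of nonnegative integers such that for each n only finitely many d ≤ n have c_d ≠ 0. -/

import Mathlib

open PowerSeries Finset

noncomputable def expPS (f : PowerSeries ℚ) : PowerSeries ℚ :=
  PowerSeries.mk fun n =>
    PowerSeries.coeff n (∑ k ∈ Finset.range (n + 1), (k.factorial : ℚ)⁻¹ • f ^ k)

lemma coeff_derivFun_aux (f : PowerSeries ℚ) (n : ℕ) :
    PowerSeries.coeff n (PowerSeries.derivativeFun f) = PowerSeries.coeff (n + 1) f * (n + 1) := by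
  exact PowerSeries.coeff_derivative f n

lemma coeff_pow_zero {f : PowerSeries ℚ} (hf : PowerSeries.constantCoeff f = 0) :
    ∀ k n : ℕ, n < k → PowerSeries.coeff n (f ^ k) = 0 := by
  intro k
  induction k with
  | zero => intro n h; omega
  | succ k ih =>
    intro n h
    rw [pow_succ, mul_comm, PowerSeries.coeff_mul]
    apply Finset.sum_eq_zero
    rintro ⟨i, j⟩ hij
    rw [Finset.HasAntidiagonal.mem_antidiagonal] at hij
    rcases Nat.eq_zero_or_pos i with hi | hi
    · subst hi; simp [PowerSeries.coeff_zero_eq_constantCoeff, hf]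
    · have hj : j < k := by omega
      rw [ih j hj, mul_zero]

lemma coeff_expPS (f : PowerSeries ℚ) (n : ℕ) :
    PowerSeries.coeff n (expPS f) =
      ∑ k ∈ Finset.range (n + 1), (k.factorial : ℚ)⁻¹ * PowerSeries.coeff n (f ^ k) := by
  simp [expPS, PowerSeries.coeff_mk]

lemma coeff_expPS_of_le {f : PowerSeries ℚ} (hf : PowerSeries.constantCoeff f = 0)
    {n N : ℕ} (hN : n + 1 ≤ N) :
    PowerSeries.coeff n (expPS f) =
      ∑ k ∈ Finset.range N, (k.factorial : ℚ)⁻¹ * PowerSeries.coeff n (f ^ k) := by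
  rw [coeff_expPS]
  apply Finset.sum_subset (Finset.range_subset_range.2 hN)
  intro k hk hk'
  rw [Finset.mem_range] at hk hk'
  rw [coeff_pow_zero hf k n (by omega), mul_zero]

lemma derivativeFun_pow (f : PowerSeries ℚ) :
    ∀ k : ℕ, PowerSeries.derivativeFun (f ^ (k + 1)) =
      ((k + 1 : ℕ) : ℚ) • (f ^ k * PowerSeries.derivativeFun f) := by
  intro k
  induction k with
  | zero => simp
  | succ k ih =>
    rw [pow_succ, PowerSeries.derivativeFun_mul, ih]
    have h : ((k + 1 + 1 : ℕ) : ℚ) = ((k + 1 : ℕ) : ℚ) + 1 := by push_cast; ring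
    simp only [smul_eq_mul, PowerSeries.smul_eq_C_mul, h, map_add, map_one, map_natCast]
    push_cast
    ring

lemma derivativeFun_expPS {f : PowerSeries ℚ} (hf : PowerSeries.constantCoeff f = 0) :
    PowerSeries.derivativeFun (expPS f) = PowerSeries.derivativeFun f * expPS f := by
  ext n
  rw [coeff_derivFun_aux, PowerSeries.coeff_mul]
  have L : PowerSeries.coeff (n + 1) (expPS f) * ((n : ℚ) + 1)
      = ∑ k ∈ Finset.range (n + 1),
          (((k + 1).factorial : ℚ))⁻¹ * PowerSeries.coeff (n + 1) (f ^ (k + 1)) * ((n : ℚ) + 1) := by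
    rw [coeff_expPS_of_le hf (show n + 1 + 1 ≤ n + 2 from le_refl _), Finset.sum_range_succ']
    simp [PowerSeries.coeff_one, Finset.sum_mul]
  rw [L]
  have R : ∀ p ∈ Finset.HasAntidiagonal.antidiagonal n,
      PowerSeries.coeff p.1 f.derivativeFun * PowerSeries.coeff p.2 (expPS f)
      = ∑ k ∈ Finset.range (n + 1), (k.factorial : ℚ)⁻¹ *
          (PowerSeries.coeff p.1 f.derivativeFun * PowerSeries.coeff p.2 (f ^ k)) := by
    intro p hp
    rw [Finset.HasAntidiagonal.mem_antidiagonal] at hp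
    rw [coeff_expPS_of_le hf (show p.2 + 1 ≤ n + 1 by omega), Finset.mul_sum]
    exact Finset.sum_congr rfl (fun k _ => by ring)
  rw [Finset.sum_congr rfl R, Finset.sum_comm]
  apply Finset.sum_congr rfl
  intro k _
  rw [← Finset.mul_sum, ← PowerSeries.coeff_mul]
  have hd : PowerSeries.coeff n (f.derivativeFun * f ^ k)
      = ((k : ℚ) + 1)⁻¹ * (PowerSeries.coeff (n + 1) (f ^ (k + 1)) * ((n : ℚ) + 1)) := by
    have := derivativeFun_pow f k
    have h2 : PowerSeries.coeff n ((f ^ (k + 1)).derivativeFun)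
        = ((k : ℚ) + 1) * PowerSeries.coeff n (f.derivativeFun * f ^ k) := by
      rw [this]
      simp [mul_comm]
    rw [coeff_derivFun_aux] at h2
    have hk : ((k : ℚ) + 1) ≠ 0 := by positivity
    field_simp at h2 ⊢
    linarith [h2]
  rw [hd]
  have hfact : (((k + 1).factorial : ℚ))⁻¹ = ((k : ℚ) + 1)⁻¹ * ((k.factorial : ℚ))⁻¹ := by
    rw [Nat.factorial_succ]
    push_cast
    rw [mul_inv]
  rw [hfact]
  ring

lemma derivativeFun_sub (a b : PowerSeries ℚ) :
    (a - b).derivativeFun = a.derivativeFun - b.derivativeFun := by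
  ext n
  simp [coeff_derivFun_aux, sub_mul]

lemma eq_zero_of_ode {h u : PowerSeries ℚ} (h0 : PowerSeries.constantCoeff h = 0)
    (hd : h.derivativeFun = u * h) : h = 0 := by
  have key : ∀ n : ℕ, PowerSeries.coeff n h = 0 := by
    intro n
    induction n using Nat.strong_induction_on with
    | _ n ih =>
      match n with
      | 0 => simpa using h0
      | n + 1 =>
        have h1 : PowerSeries.coeff n h.derivativeFun = 0 := by
          rw [hd, PowerSeries.coeff_mul]
          apply Finset.sum_eq_zero
          rintro ⟨i, j⟩ hij
          rw [Finset.HasAntidiagonal.mem_antidiagonal] at hij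
          rw [ih j (by omega), mul_zero]
        rw [coeff_derivFun_aux] at h1
        have hne : ((n : ℚ) + 1) ≠ 0 := by positivity
        exact (mul_eq_zero.mp h1).resolve_right hne
  ext n
  simp [key n]

lemma constantCoeff_expPS (f : PowerSeries ℚ) :
    PowerSeries.constantCoeff (expPS f) = 1 := by
  rw [← PowerSeries.coeff_zero_eq_constantCoeff_apply, coeff_expPS]
  simp

lemma expPS_add {f g : PowerSeries ℚ} (hf : PowerSeries.constantCoeff f = 0)
    (hg : PowerSeries.constantCoeff g = 0) :
    expPS (f + g) = expPS f * expPS g := by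
  have hfg : PowerSeries.constantCoeff (f + g) = 0 := by simp [hf, hg]
  have key : (expPS (f + g) - expPS f * expPS g) = 0 := by
    apply eq_zero_of_ode (u := (f + g).derivativeFun)
    · simp [constantCoeff_expPS]
    · rw [derivativeFun_sub, derivativeFun_expPS hfg, PowerSeries.derivativeFun_mul,
        derivativeFun_expPS hf, derivativeFun_expPS hg, PowerSeries.derivativeFun_add,
        mul_sub]
      simp only [smul_eq_mul]
      ring
  linear_combination (norm := ring_nf) key

lemma expPS_zero : expPS (0 : PowerSeries ℚ) = 1 := by
  ext n
  rw [coeff_expPS]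
  rcases Nat.eq_zero_or_pos n with h | h
  · subst h; simp
  · rw [Finset.sum_eq_zero, PowerSeries.coeff_one, if_neg (by omega)]
    intro k hk
    rcases Nat.eq_zero_or_pos k with hk0 | hk0
    · subst hk0
      simp only [pow_zero, PowerSeries.coeff_one, if_neg (by omega : ¬ n = 0), mul_zero]
    · rw [zero_pow (by omega), map_zero, mul_zero]

lemma expPS_nsmul {f : PowerSeries ℚ} (hf : PowerSeries.constantCoeff f = 0) :
    ∀ m : ℕ, expPS (m • f) = (expPS f) ^ m := by
  intro m
  induction m with
  | zero => simpa using expPS_zero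
  | succ m ih =>
    rw [succ_nsmul, expPS_add (by simp [hf, map_nsmul]) hf, ih, pow_succ]

lemma expPS_sum {ι : Type*} (S : Finset ι) (f : ι → PowerSeries ℚ)
    (hf : ∀ i ∈ S, PowerSeries.constantCoeff (f i) = 0) :
    expPS (∑ i ∈ S, f i) = ∏ i ∈ S, expPS (f i) := by
  induction S using Finset.cons_induction with
  | empty => simpa using expPS_zero
  | cons a s ha ih =>
    rw [Finset.sum_cons, Finset.prod_cons,
      expPS_add (hf a (Finset.mem_cons_self a s)) (by
        rw [map_sum]
        exact Finset.sum_eq_zero fun i hi => hf i (Finset.mem_cons_of_mem hi)),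
      ih fun i hi => hf i (Finset.mem_cons_of_mem hi)]

noncomputable def logInv (d : ℕ) : PowerSeries ℚ :=
  PowerSeries.mk fun m => if d ∣ m ∧ m ≠ 0 then (d : ℚ) / m else 0

lemma constantCoeff_logInv (d : ℕ) : PowerSeries.constantCoeff (logInv d) = 0 := by
  rw [← PowerSeries.coeff_zero_eq_constantCoeff_apply, logInv, PowerSeries.coeff_mk]
  simp

lemma derivativeFun_logInv (d : ℕ) :
    (logInv d).derivativeFun = PowerSeries.mk fun m => if d ∣ (m + 1) then (d : ℚ) else 0 := by
  ext m
  rw [coeff_derivFun_aux, logInv, PowerSeries.coeff_mk, PowerSeries.coeff_mk]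
  by_cases h : d ∣ (m + 1)
  · rw [if_pos ⟨h, by omega⟩, if_pos h]
    have : ((m : ℚ) + 1) ≠ 0 := by positivity
    field_simp
    push_cast; ring
  · rw [if_neg (by tauto), if_neg h, zero_mul]

lemma derivativeFun_X : (PowerSeries.X : PowerSeries ℚ).derivativeFun = 1 := by
  ext m
  rw [coeff_derivFun_aux, PowerSeries.coeff_X, PowerSeries.coeff_one]
  rcases Nat.eq_zero_or_pos m with h | h
  · subst h; norm_num
  · rw [if_neg (by omega), if_neg (by omega), zero_mul]

lemma derivativeFun_X_pow {d : ℕ} (hd : 1 ≤ d) :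
    ((PowerSeries.X : PowerSeries ℚ) ^ d).derivativeFun
      = (d : ℚ) • (PowerSeries.X : PowerSeries ℚ) ^ (d - 1) := by
  obtain ⟨k, rfl⟩ : ∃ k, d = k + 1 := ⟨d - 1, by omega⟩
  rw [derivativeFun_pow, derivativeFun_X]
  push_cast
  simp

lemma key_logInv {d : ℕ} (hd : 1 ≤ d) :
    (1 - (PowerSeries.X : PowerSeries ℚ) ^ d) * (logInv d).derivativeFun
      = (d : ℚ) • (PowerSeries.X : PowerSeries ℚ) ^ (d - 1) := by
  rw [derivativeFun_logInv]
  ext m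
  rw [sub_mul, one_mul, map_sub, PowerSeries.coeff_X_pow_mul', PowerSeries.coeff_mk,
    PowerSeries.coeff_smul, PowerSeries.coeff_X_pow]
  by_cases hm : d ≤ m
  · have hiff : d ∣ (m + 1) ↔ d ∣ (m - d + 1) := by
      constructor
      · intro h
        have : m - d + 1 = (m + 1) - d := by omega
        rw [this]
        exact Nat.dvd_sub h dvd_rfl
      · intro h
        have : m + 1 = (m - d + 1) + d := by omega
        rw [this]
        exact Nat.dvd_add h dvd_rfl
    rw [if_pos hm, PowerSeries.coeff_mk]
    by_cases h : d ∣ (m + 1)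
    · rw [if_pos h, if_pos (hiff.mp h), if_neg (by omega), smul_zero, sub_self]
    · rw [if_neg h, if_neg (fun hh => h (hiff.mpr hh)), if_neg (by omega), smul_zero, sub_self]
  · rw [if_neg hm, sub_zero]
    by_cases h : d ∣ (m + 1)
    · have : m + 1 = d := by
        have h1 : d ≤ m + 1 := Nat.le_of_dvd (by omega) h
        have h2 := Nat.le_of_dvd (by omega) h
        rcases h with ⟨c, hc⟩
        omega
      rw [if_pos h, if_pos (by omega), smul_eq_mul, mul_one]
    · have hne : ¬ (m = d - 1) := by
        intro hmd
        apply h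
        have : m + 1 = d := by omega
        rw [this]
      rw [if_neg h, if_neg hne, smul_zero]

lemma eq_one_of_deriv_zero {h : PowerSeries ℚ} (hd : h.derivativeFun = 0)
    (h0 : PowerSeries.constantCoeff h = 1) : h = 1 := by
  have : h - 1 = 0 := by
    apply eq_zero_of_ode (u := 0)
    · simp [h0]
    · rw [derivativeFun_sub, PowerSeries.derivativeFun_one, hd, zero_mul, sub_zero]
  linear_combination (norm := ring_nf) this

lemma expPS_logInv {d : ℕ} (hd : 1 ≤ d) :
    expPS (logInv d) = (1 - (PowerSeries.X : PowerSeries ℚ) ^ d)⁻¹ := by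
  have hcc : PowerSeries.constantCoeff (1 - (PowerSeries.X : PowerSeries ℚ) ^ d) = 1 := by
    rw [map_sub, map_one, map_pow, PowerSeries.constantCoeff_X, zero_pow (by omega), sub_zero]
  have hmul : expPS (logInv d) * (1 - (PowerSeries.X : PowerSeries ℚ) ^ d) = 1 := by
    apply eq_one_of_deriv_zero
    · rw [PowerSeries.derivativeFun_mul, derivativeFun_sub, PowerSeries.derivativeFun_one,
        derivativeFun_X_pow hd, derivativeFun_expPS (constantCoeff_logInv d)]
      have k := key_logInv hd
      simp only [smul_eq_mul, PowerSeries.smul_eq_C_mul] at k ⊢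
      linear_combination (norm := ring_nf) expPS (logInv d) * k
    · rw [map_mul, constantCoeff_expPS, hcc, one_mul]
  rw [PowerSeries.eq_inv_iff_mul_eq_one (by rw [hcc]; norm_num)]
  exact hmul

lemma coeff_expPS_congr {f g : PowerSeries ℚ} {n : ℕ}
    (h : ∀ m ≤ n, PowerSeries.coeff m f = PowerSeries.coeff m g) :
    PowerSeries.coeff n (expPS f) = PowerSeries.coeff n (expPS g) := by
  have hpow : ∀ k : ℕ, ∀ m ≤ n, PowerSeries.coeff m (f ^ k) = PowerSeries.coeff m (g ^ k) := by
    intro k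
    induction k with
    | zero => intro m _; rfl
    | succ k ih =>
      intro m hm
      rw [pow_succ, pow_succ, PowerSeries.coeff_mul, PowerSeries.coeff_mul]
      apply Finset.sum_congr rfl
      rintro ⟨i, j⟩ hij
      rw [Finset.HasAntidiagonal.mem_antidiagonal] at hij
      rw [ih i (by omega), h j (by omega)]
  rw [coeff_expPS, coeff_expPS]
  exact Finset.sum_congr rfl fun k _ => by rw [hpow k n le_rfl]

/-- `exp (∑_{n ≥ 1} (∑_{d ∣ n} d c_d) tⁿ/n) = ∏_{d ≥ 1} (1 - t^d)^{-c_d}`, the infinite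
product being interpreted coefficientwise (only factors with `d ≤ n` contribute to the
coefficient of `tⁿ`). -/
theorem exp_eq_euler_product (c : ℕ → ℕ)
    (hfin : ∀ n : ℕ, {d : ℕ | d ≤ n ∧ c d ≠ 0}.Finite) :
    ∀ n : ℕ,
      PowerSeries.coeff n (expPS (PowerSeries.mk fun m =>
          if m = 0 then 0 else ((∑ d ∈ m.divisors, d * c d : ℕ) : ℚ) / m)) =
        PowerSeries.coeff n
          (∏ d ∈ Finset.Icc 1 n, ((1 - PowerSeries.X ^ d : PowerSeries ℚ)⁻¹) ^ c d) := by
  intro n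
  have hstep : ∀ m ≤ n,
      PowerSeries.coeff m (PowerSeries.mk fun m =>
          if m = 0 then 0 else ((∑ d ∈ m.divisors, d * c d : ℕ) : ℚ) / m)
      = PowerSeries.coeff m (∑ d ∈ Finset.Icc 1 n, (c d) • logInv d) := by
    intro m hm
    rw [PowerSeries.coeff_mk, map_sum]
    rcases Nat.eq_zero_or_pos m with h0 | h0
    · subst h0
      rw [if_pos rfl]
      symm
      apply Finset.sum_eq_zero
      intro d _
      rw [map_nsmul, PowerSeries.coeff_zero_eq_constantCoeff_apply, constantCoeff_logInv,
        smul_zero]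
    · rw [if_neg (by omega)]
      have hterm : ∀ d ∈ Finset.Icc 1 n, PowerSeries.coeff m ((c d) • logInv d)
          = if d ∣ m then (c d : ℚ) * ((d : ℚ) / m) else 0 := by
        intro d _
        rw [map_nsmul, nsmul_eq_mul, logInv, PowerSeries.coeff_mk]
        by_cases h : d ∣ m
        · rw [if_pos ⟨h, by omega⟩, if_pos h]
        · rw [if_neg (by tauto), if_neg h, mul_zero]
      rw [Finset.sum_congr rfl hterm, ← Finset.sum_filter]
      have hset : (Finset.Icc 1 n).filter (· ∣ m) = m.divisors := by
        ext d
        simp only [Finset.mem_filter, Finset.mem_Icc, Nat.mem_divisors]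
        constructor
        · rintro ⟨⟨h1, h2⟩, h3⟩
          exact ⟨h3, by omega⟩
        · rintro ⟨h1, h2⟩
          refine ⟨⟨Nat.pos_of_dvd_of_pos h1 h0, le_trans (Nat.le_of_dvd h0 h1) hm⟩, h1⟩
      rw [hset]
      push_cast
      rw [Finset.sum_div]
      exact Finset.sum_congr rfl fun d _ => by ring
  rw [coeff_expPS_congr hstep,
    expPS_sum _ _ (fun d _ => by rw [map_nsmul, constantCoeff_logInv, smul_zero])]
  congr 1
  apply Finset.prod_congr rfl
  intro d hd
  rw [Finset.mem_Icc] at hd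
  rw [expPS_nsmul (constantCoeff_logInv d), expPS_logInv hd.1]
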